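/- The SONC cone is not closed under affine transformations of variables: the monomial square f(x₁,x₂) = x₁²x₂² is a nonnegative circuit polynomial (in particular f ∈ C_{2,4}), yet the polynomial obtained from f by the affine substitution x₁ ↦ 1 − x₁, x₂ ↦ 1 − x₂, namely ((1 − x₁)(1 − x₂))², does not belong to C_{2,4}. -/

import Mathlib

open MvPolynomial Finset
open scoped Classical

noncomputable section

/-- A circuit polynomial in `n` variables. -/
def IsCircuitPoly (n : ℕ) (f : MvPolynomial (Fin n) ℝ) : Prop :=
  ∃ (r : ℕ) (α : Fin (r + 1) → (Fin n →₀ ℕ)) (β : Fin n →₀ ℕ)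
    (cf : Fin (r + 1) → ℝ) (c : ℝ) (lam : Fin (r + 1) → ℝ),
    r ≤ n ∧
    (∀ j, 0 < cf j) ∧
    (∀ j i, Even (α j i)) ∧
    AffineIndependent ℝ (fun j (i : Fin n) => ((α j i : ℕ) : ℝ)) ∧
    (∀ j, 0 < lam j) ∧ (∑ j, lam j) = 1 ∧
    (∀ i, ((β i : ℕ) : ℝ) = ∑ j, lam j * ((α j i : ℕ) : ℝ)) ∧
    f = (∑ j, monomial (α j) (cf j)) + monomial β c

/-- A nonnegative circuit polynomial. -/
def IsNNCircuit (n : ℕ) (f : MvPolynomial (Fin n) ℝ) : Prop :=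
  IsCircuitPoly n f ∧ ∀ x : Fin n → ℝ, 0 ≤ eval x f

/-- A sum of nonnegative circuit polynomials (no degree bound). -/
def IsSONC (n : ℕ) (f : MvPolynomial (Fin n) ℝ) : Prop :=
  ∃ (k : ℕ) (μ : Fin k → ℝ) (p : Fin k → MvPolynomial (Fin n) ℝ),
    (∀ i, 0 ≤ μ i) ∧ (∀ i, IsNNCircuit n (p i)) ∧
    f = ∑ i, C (μ i) * p i

/-- A SONC built from nonnegative circuit polynomials of degree at most `D`. -/
def IsSONCOfDeg (n D : ℕ) (f : MvPolynomial (Fin n) ℝ) : Prop :=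
  ∃ (k : ℕ) (μ : Fin k → ℝ) (p : Fin k → MvPolynomial (Fin n) ℝ),
    (∀ i, 0 ≤ μ i) ∧ (∀ i, IsNNCircuit n (p i) ∧ (p i).totalDegree ≤ D) ∧
    f = ∑ i, C (μ i) * p i

/-- The SONC cone `C_{n,D}`. -/
def InSONCCone (n D : ℕ) (f : MvPolynomial (Fin n) ℝ) : Prop :=
  f.totalDegree ≤ D ∧ IsSONCOfDeg n D f


-- univariate key lemma
lemma key (r : ℕ) (e : Fin (r+1) → ℕ) (be : ℕ) (cf : Fin (r+1) → ℝ) (c : ℝ)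
    (hcf : ∀ j, 0 < cf j)
    (h : ∀ t : ℝ, (∑ j, cf j * t ^ e j) + c * t ^ be = 0) :
    (∀ j, e j = be) ∧ (∑ j, cf j) + c = 0 := by
  set Q : Polynomial ℝ :=
    (∑ j, Polynomial.C (cf j) * Polynomial.X ^ e j) + Polynomial.C c * Polynomial.X ^ be with hQdef
  have hQ : Q = 0 := by
    apply Polynomial.funext
    intro t
    simp [hQdef, Polynomial.eval_finset_sum, h t]
  have hcoeff : ∀ m, (∑ j, if m = e j then cf j else 0) + (if m = be then c else 0) = 0 := by
    intro m
    have := congrArg (fun q => Polynomial.coeff q m) hQ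
    simpa [hQdef, Polynomial.finset_sum_coeff, Polynomial.coeff_X_pow] using this
  have h1 : ∀ j, e j = be := by
    intro j0
    by_contra hne
    have := hcoeff (e j0)
    rw [if_neg hne, add_zero] at this
    have hz := (Finset.sum_eq_zero_iff_of_nonneg (by
      intro j _
      split <;> [exact (hcf j).le; rfl])).mp this j0 (Finset.mem_univ _)
    rw [if_pos rfl] at hz
    exact absurd hz (hcf j0).ne'
  refine ⟨h1, ?_⟩
  have := hcoeff be
  simpa [h1] using this

lemma eval_monomial_pt (s : Fin 2 →₀ ℕ) (a t u : ℝ) :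
    eval ![t, u] (monomial s a) = a * t ^ s 0 * u ^ s 1 := by
  rw [eval_monomial, Finsupp.prod_fintype _ _ (fun i => pow_zero _)]
  rw [Fin.prod_univ_two]
  simp [mul_assoc]

-- circuit vanishing on both lines is zero
lemma circuit_vanish (p : MvPolynomial (Fin 2) ℝ) (hp : IsNNCircuit 2 p)
    (h1 : ∀ t : ℝ, eval ![(1:ℝ), t] p = 0) (h2 : ∀ t : ℝ, eval ![t, (1:ℝ)] p = 0) :
    p = 0 := by
  obtain ⟨⟨r, α, β, cf, c, lam, _, hcf, _, _, _, _, _, hfeq⟩, _⟩ := hp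
  have e1 : ∀ t : ℝ, (∑ j, cf j * t ^ (α j 1)) + c * t ^ (β 1) = 0 := by
    intro t
    have := h1 t
    rw [hfeq] at this
    simpa [eval_monomial_pt] using this
  have e0 : ∀ t : ℝ, (∑ j, cf j * t ^ (α j 0)) + c * t ^ (β 0) = 0 := by
    intro t
    have := h2 t
    rw [hfeq] at this
    simpa [eval_monomial_pt, mul_comm] using this
  obtain ⟨ha1, hsum⟩ := key r (fun j => α j 1) (β 1) cf c hcf e1
  obtain ⟨ha0, _⟩ := key r (fun j => α j 0) (β 0) cf c hcf e0
  have hαβ : ∀ j, α j = β := by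
    intro j
    ext i
    fin_cases i
    · exact ha0 j
    · exact ha1 j
  rw [hfeq]
  calc (∑ j, monomial (α j) (cf j)) + monomial β c
      = monomial β ((∑ j, cf j) + c) := by
        simp only [hαβ, map_add]
        rw [← map_sum (monomial β) cf Finset.univ]
    _ = 0 := by rw [hsum, map_zero]

lemma mono_eq : (X 0 ^ 2 * X 1 ^ 2 : MvPolynomial (Fin 2) ℝ)
    = monomial (Finsupp.single 0 2 + Finsupp.single 1 2) 1 := by
  rw [X_pow_eq_monomial, X_pow_eq_monomial, monomial_mul, one_mul]

/-- The SONC cone is not closed under affine transformations of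
variables: `f = x₁²x₂²` is a nonnegative circuit polynomial (so `f ∈ C_{2,4}`),
yet the polynomial obtained from `f` by the substitution `x₁ ↦ 1 − x₁`,
`x₂ ↦ 1 − x₂`, namely `((1 − x₁)(1 − x₂))²`, is not in `C_{2,4}`. -/
theorem sonc_cone_not_closed_under_affine_transformation :
    IsNNCircuit 2 (X 0 ^ 2 * X 1 ^ 2) ∧
    InSONCCone 2 4 (X 0 ^ 2 * X 1 ^ 2 : MvPolynomial (Fin 2) ℝ) ∧
    (bind₁ (fun i : Fin 2 => 1 - X i)) (X 0 ^ 2 * X 1 ^ 2 : MvPolynomial (Fin 2) ℝ)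
      = ((1 - X 0) * (1 - X 1)) ^ 2 ∧
    ¬ InSONCCone 2 4 (((1 - X 0) * (1 - X 1)) ^ 2) := by
  set s : Fin 2 →₀ ℕ := Finsupp.single 0 2 + Finsupp.single 1 2 with hs
  have hnn : IsNNCircuit 2 (X 0 ^ 2 * X 1 ^ 2 : MvPolynomial (Fin 2) ℝ) := by
    constructor
    · refine ⟨0, fun _ => s, s, fun _ => 1, 0, fun _ => 1, by norm_num, fun _ => one_pos,
        ?_, ?_, fun _ => one_pos, by simp, ?_, ?_⟩
      · intro j i
        fin_cases i <;> simp [hs, Finsupp.single_apply]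
      · haveI : Subsingleton (Fin (0 + 1)) := ⟨fun a b => Fin.ext (by omega)⟩
        exact affineIndependent_of_subsingleton ℝ _
      · intro i; simp
      · rw [mono_eq]; simp [hs]
    · intro x
      have : eval x (X 0 ^ 2 * X 1 ^ 2 : MvPolynomial (Fin 2) ℝ) = (x 0) ^ 2 * (x 1) ^ 2 := by
        simp
      rw [this]; positivity
  have hdeg : (X 0 ^ 2 * X 1 ^ 2 : MvPolynomial (Fin 2) ℝ).totalDegree ≤ 4 := by
    calc (X 0 ^ 2 * X 1 ^ 2 : MvPolynomial (Fin 2) ℝ).totalDegree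
        ≤ (X 0 ^ 2 : MvPolynomial (Fin 2) ℝ).totalDegree
          + (X 1 ^ 2 : MvPolynomial (Fin 2) ℝ).totalDegree := totalDegree_mul _ _
      _ ≤ 4 := by simp [totalDegree_X_pow]
  refine ⟨hnn, ⟨hdeg, 1, fun _ => 1, fun _ => X 0 ^ 2 * X 1 ^ 2,
    fun _ => zero_le_one, fun _ => ⟨hnn, hdeg⟩, by simp⟩, ?_, ?_⟩
  · simp only [map_mul, map_pow, bind₁_X_right]
    ring
  · rintro ⟨-, k, μ, p, hμ, hp, hsum⟩
    have evalg : ∀ a b : Fin 2 → ℝ,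
        eval a (((1 - X 0) * (1 - X 1)) ^ 2 : MvPolynomial (Fin 2) ℝ)
          = ((1 - a 0) * (1 - a 1)) ^ 2 := by
      intro a b; simp
    have hterm : ∀ i, C (μ i) * p i = 0 := by
      intro i
      rcases (hμ i).eq_or_lt with h | h
      · rw [← h]; simp
      · have hz : ∀ a : Fin 2 → ℝ,
            eval a (((1 - X 0) * (1 - X 1)) ^ 2 : MvPolynomial (Fin 2) ℝ) = 0 →
            eval a (p i) = 0 := by
          intro a ha
          have hsum0 : ∑ j, μ j * eval a (p j) = 0 := by
            have := congrArg (eval a) hsum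
            rw [ha] at this
            simpa [map_sum] using this.symm
          have hz0 := (Finset.sum_eq_zero_iff_of_nonneg (by
            intro j _
            exact mul_nonneg (hμ j) ((hp j).1.2 a))).mp hsum0 i (Finset.mem_univ _)
          exact (mul_eq_zero.mp hz0).resolve_left h.ne'
        have h1 : ∀ t : ℝ, eval ![(1:ℝ), t] (p i) = 0 := by
          intro t
          apply hz
          rw [evalg _ ![(1:ℝ), t]]
          simp
        have h2 : ∀ t : ℝ, eval ![t, (1:ℝ)] (p i) = 0 := by
          intro t
          apply hz
          rw [evalg _ ![t, (1:ℝ)]]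
          simp
        rw [circuit_vanish (p i) (hp i).1 h1 h2, mul_zero]
    have hg0 : (((1 - X 0) * (1 - X 1)) ^ 2 : MvPolynomial (Fin 2) ℝ) = 0 := by
      rw [hsum]
      exact Finset.sum_eq_zero fun i _ => hterm i
    have := congrArg (eval ![(0:ℝ), 0]) hg0
    rw [evalg _ ![(0:ℝ),0]] at this
    norm_num at this
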